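/- Let h(x,x') ≥ 0 be a measurable function of pairs of i.i.d. draws from P with CDF H(t) = P(h ≤ t), and let D(X,t) = (2/n)Σ_{i=1}^{n/2} 1{h(x_i, x_{i+n/2}) ≤ t} be the empirical CDF based on n/2 independent pairs. Let d_δ(X) be the smallest d with D(X,d) ≥ 1−δ and h_{δ'} the (1−δ') quantile of H, with δ < δ'. Then for x, x' fresh independent draws from P, P(h(x,x') > d_δ(X)) ≤ δ' + 2e^{-(δ'−δ)^2 n}. -/

import Mathlib

open MeasureTheory

/-- The paired empirical CDF `D(X,t) = (2/n) Σ_{i=1}^{n/2} 1{h(x_i, x_{i+n/2}) ≤ t}`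
based on a sample of size `n = 2m`. -/
noncomputable def Demp {𝒳 : Type*} (h : 𝒳 → 𝒳 → ℝ) (m : ℕ)
    (X : Fin (2 * m) → 𝒳) (t : ℝ) : ℝ :=
  (2 / (2 * m : ℝ)) *
    ((Finset.univ.filter fun i : Fin m =>
        h (X ⟨i.1, by have := i.isLt; omega⟩) (X ⟨i.1 + m, by have := i.isLt; omega⟩) ≤ t).card : ℝ)

/-- The empirical `(1-δ)`-quantile: the smallest `d` with `D(X,d) ≥ 1-δ`. -/
noncomputable def dquant {𝒳 : Type*} (h : 𝒳 → 𝒳 → ℝ) (m : ℕ) (δ : ℝ)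
    (X : Fin (2 * m) → 𝒳) : ℝ :=
  sInf {d : ℝ | 1 - δ ≤ Demp h m X d}

section Aux

open Real Set ProbabilityTheory Filter

/-- Hoeffding's lemma for Bernoulli: `p e^t + (1-p) ≤ exp (p t + t²/8)` for `t ≥ 0`. -/
lemma bernoulli_mgf_le {p : ℝ} (hp0 : 0 ≤ p) (hp1 : p ≤ 1) {t : ℝ} (ht : 0 ≤ t) :
    p * Real.exp t + (1 - p) ≤ Real.exp (p * t + t ^ 2 / 8) := by
  set d : ℝ → ℝ := fun s => p * Real.exp s + (1 - p) with hd
  have hdpos : ∀ s, 0 < d s := by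
    intro s
    rcases eq_or_lt_of_le hp0 with h0 | h0
    · simp [hd, ← h0]
    · have h1 := Real.exp_pos s
      have h2 : 0 < p * Real.exp s := mul_pos h0 h1
      simp only [hd]; nlinarith
  have hderiv_d : ∀ s, HasDerivAt d (p * Real.exp s) s := by
    intro s
    exact ((Real.hasDerivAt_exp s).const_mul p).add_const (1 - p)
  set ψ : ℝ → ℝ := fun s => p * Real.exp s / d s with hψ
  have hderiv_ψ : ∀ s, HasDerivAt ψ (p * Real.exp s * (1 - p) / (d s) ^ 2) s := by
    intro s
    have h := ((Real.hasDerivAt_exp s).const_mul p).div (hderiv_d s) (hdpos s).ne'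
    refine h.congr_deriv ?_
    have := (hdpos s).ne'
    rw [div_left_inj' (pow_ne_zero 2 this)]; simp only [hd]
    ring
  have hψ0 : ψ 0 = p := by simp [hψ, hd]
  -- Step 1 : ψ s ≤ p + s / 4 for s ≥ 0
  have step1 : ∀ s, 0 ≤ s → ψ s ≤ p + s / 4 := by
    intro s hs
    set G : ℝ → ℝ := fun s => p + s / 4 - ψ s with hG
    have hG0 : G 0 = 0 := by simp [hG, hψ0]
    have hderiv_G : ∀ x, HasDerivAt G (1 / 4 - p * Real.exp x * (1 - p) / (d x) ^ 2) x := by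
      intro x
      have h1 : HasDerivAt (fun s : ℝ => p + s / 4) (1 / 4) x := by
        simpa using ((hasDerivAt_id x).div_const 4).const_add p
      exact h1.sub (hderiv_ψ x)
    have hmono : MonotoneOn G (Ici (0 : ℝ)) := by
      refine monotoneOn_of_deriv_nonneg (convex_Ici 0) ?_ ?_ ?_
      · exact fun x _ => ((hderiv_G x).continuousAt).continuousWithinAt
      · exact fun x _ => ((hderiv_G x).differentiableAt).differentiableWithinAt
      · intro x _
        rw [(hderiv_G x).deriv, sub_nonneg, div_le_iff₀ (pow_pos (hdpos x) 2)]
        simp only [hd]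
        nlinarith [sq_nonneg (p * Real.exp x - (1 - p))]
    have h4 := hmono (self_mem_Ici) hs hs
    rw [hG0] at h4
    simpa [hG, sub_nonneg] using h4
  -- Step 2 : log (d t) ≤ p t + t²/8
  set φ : ℝ → ℝ := fun s => Real.log (d s) with hφ
  have hderiv_φ : ∀ s, HasDerivAt φ (ψ s) s := by
    intro s
    simpa [hψ, hd] using (hderiv_d s).log (hdpos s).ne'
  have hφ0 : φ 0 = 0 := by simp [hφ, hd]
  set F : ℝ → ℝ := fun s => p * s + s ^ 2 / 8 - φ s with hF
  have hderiv_F : ∀ x, HasDerivAt F (p + x / 4 - ψ x) x := by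
    intro x
    have h1 : HasDerivAt (fun s : ℝ => p * s + s ^ 2 / 8) (p + x / 4) x := by
      have h2 := ((hasDerivAt_id x).const_mul p).add ((hasDerivAt_pow 2 x).div_const 8)
      refine h2.congr_deriv ?_
      norm_num; ring
    exact h1.sub (hderiv_φ x)
  have hmonoF : MonotoneOn F (Ici (0 : ℝ)) := by
    refine monotoneOn_of_deriv_nonneg (convex_Ici 0) ?_ ?_ ?_
    · exact fun x _ => ((hderiv_F x).continuousAt).continuousWithinAt
    · exact fun x _ => ((hderiv_F x).differentiableAt).differentiableWithinAt
    · intro x hx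
      rw [(hderiv_F x).deriv]
      rw [interior_Ici] at hx
      have := step1 x (le_of_lt hx)
      linarith
  have hF0 : F 0 = 0 := by simp [hF, hφ0]
  have hFt : 0 ≤ F t := by
    have h5 := hmonoF (self_mem_Ici) ht ht
    rwa [hF0] at h5
  have hfin : φ t ≤ p * t + t ^ 2 / 8 := by
    simp only [hF, sub_nonneg] at hFt; linarith [hFt]
  calc d t = Real.exp (φ t) := (Real.exp_log (hdpos t)).symm
  _ ≤ _ := Real.exp_le_exp.mpr hfin

lemma pi_tail_le (μ : Measure ℝ) [IsProbabilityMeasure μ] (m : ℕ) (c r t : ℝ) (ht : 0 ≤ t) :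
    (Measure.pi fun _ : Fin m => μ)
        {y | r ≤ ((Finset.univ.filter fun i : Fin m => y i < c).card : ℝ)}
      ≤ ENNReal.ofReal (Real.exp (-(t * r)) *
          ((μ (Iio c)).toReal * Real.exp t + (μ (Ici c)).toReal) ^ m) := by
  classical
  set Pm : Measure (Fin m → ℝ) := Measure.pi fun _ => μ with hPm
  set R : Finset (Fin m) → Set (Fin m → ℝ) :=
    fun s => Set.univ.pi fun i => if i ∈ s then Iio c else Ici c with hR
  have hRval : ∀ s : Finset (Fin m),
      Pm (R s) = μ (Iio c) ^ s.card * μ (Ici c) ^ (m - s.card) := by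
    intro s
    rw [hPm, hR, Measure.pi_pi]
    have : ∀ i : Fin m, μ (if i ∈ s then Iio c else Ici c)
        = if i ∈ s then μ (Iio c) else μ (Ici c) := fun i => apply_ite μ _ _ _
    rw [Finset.prod_congr rfl fun i _ => this i, Finset.prod_ite, Finset.prod_const,
      Finset.prod_const]
    congr 2
    · simp
    · have hcompl : Finset.filter (fun x => x ∉ s) Finset.univ = sᶜ := by ext; simp
      rw [hcompl, Finset.card_compl, Fintype.card_fin]
  have hsub : {y : Fin m → ℝ | r ≤ ((Finset.univ.filter fun i => y i < c).card : ℝ)}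
      ⊆ ⋃ s ∈ Finset.univ.powerset.filter (fun s : Finset (Fin m) => r ≤ (s.card : ℝ)), R s := by
    intro y hy
    refine Set.mem_iUnion₂.mpr ⟨Finset.univ.filter fun i => y i < c, ?_, ?_⟩
    · simp only [Finset.mem_filter, Finset.mem_powerset]
      exact ⟨Finset.subset_univ _, hy⟩
    · intro i _
      by_cases hi : y i < c <;> simp [hi]
      exact le_of_not_gt hi
  calc Pm _ ≤ ∑ s ∈ Finset.univ.powerset.filter (fun s : Finset (Fin m) => r ≤ (s.card : ℝ)),
        Pm (R s) := (measure_mono hsub).trans (measure_biUnion_finset_le _ _)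
    _ ≤ ∑ s ∈ Finset.univ.powerset.filter (fun s : Finset (Fin m) => r ≤ (s.card : ℝ)),
        ENNReal.ofReal (Real.exp (t * s.card - t * r)) * Pm (R s) := by
      refine Finset.sum_le_sum fun s hs => ?_
      refine le_mul_of_one_le_left zero_le ?_
      rw [Finset.mem_filter] at hs
      have : (0:ℝ) ≤ t * s.card - t * r := by nlinarith [hs.2]
      rw [← ENNReal.ofReal_one]
      exact ENNReal.ofReal_le_ofReal (by simpa using Real.one_le_exp this)
    _ ≤ ∑ s ∈ Finset.univ.powerset,
        ENNReal.ofReal (Real.exp (t * s.card - t * r)) * Pm (R s) :=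
      Finset.sum_le_sum_of_subset (Finset.filter_subset _ _)
    _ = ENNReal.ofReal (Real.exp (-(t * r))) * ∑ s ∈ Finset.univ.powerset,
        (ENNReal.ofReal (Real.exp t) * μ (Iio c)) ^ s.card * μ (Ici c) ^ (m - s.card) := by
      rw [Finset.mul_sum]
      refine Finset.sum_congr rfl fun s _ => ?_
      rw [hRval s]
      rw [show t * s.card - t * r = -(t*r) + s.card * t by ring, Real.exp_add,
        Real.exp_nat_mul, ENNReal.ofReal_mul (Real.exp_nonneg _),
        ENNReal.ofReal_pow (Real.exp_nonneg _), mul_pow]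
      ring
    _ = ENNReal.ofReal (Real.exp (-(t * r))) *
        (ENNReal.ofReal (Real.exp t) * μ (Iio c) + μ (Ici c)) ^ m := by
      congr 1
      have := Finset.prod_add (fun _ : Fin m => ENNReal.ofReal (Real.exp t) * μ (Iio c))
        (fun _ : Fin m => μ (Ici c)) Finset.univ
      rw [Finset.prod_const, Finset.card_univ, Fintype.card_fin] at this
      rw [this]
      refine Finset.sum_congr rfl fun s hs => ?_
      rw [Finset.prod_const, Finset.prod_const, Finset.card_sdiff_of_subset (Finset.subset_univ s),
        Finset.card_univ, Fintype.card_fin]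
    _ = ENNReal.ofReal (Real.exp (-(t * r)) *
          ((μ (Iio c)).toReal * Real.exp t + (μ (Ici c)).toReal) ^ m) := by
      have h1 : μ (Iio c) = ENNReal.ofReal (μ (Iio c)).toReal :=
        (ENNReal.ofReal_toReal (measure_ne_top μ _)).symm
      have h2 : μ (Ici c) = ENNReal.ofReal (μ (Ici c)).toReal :=
        (ENNReal.ofReal_toReal (measure_ne_top μ _)).symm
      rw [ENNReal.ofReal_mul (Real.exp_nonneg _)]
      congr 1
      conv_lhs => rw [h1, h2]
      rw [← ENNReal.ofReal_mul (Real.exp_nonneg _), ← ENNReal.ofReal_add (by positivity)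
        ENNReal.toReal_nonneg, ← ENNReal.ofReal_pow (by positivity)]
      congr 1
      ring

lemma mp_pairs {𝒳 : Type*} [MeasurableSpace 𝒳] (P : Measure 𝒳) [IsProbabilityMeasure P]
    (h : 𝒳 → 𝒳 → ℝ) (hmeas : Measurable (Function.uncurry h)) (m : ℕ) :
    MeasurePreserving
      (fun (X : Fin (2 * m) → 𝒳) (i : Fin m) =>
        h (X ⟨i.1, by have := i.isLt; omega⟩) (X ⟨i.1 + m, by have := i.isLt; omega⟩))
      (Measure.pi fun _ : Fin (2 * m) => P)
      (Measure.pi fun _ : Fin m => (P.prod P).map (Function.uncurry h)) := by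
  set e : Fin m ⊕ Fin m ≃ Fin (2 * m) := finSumFinEquiv.trans (finCongr (two_mul m).symm) with he
  have mp1 : MeasurePreserving (MeasurableEquiv.piCongrLeft (fun _ : Fin (2 * m) => 𝒳) e).symm
      (Measure.pi fun _ : Fin (2 * m) => P) (Measure.pi fun _ : Fin m ⊕ Fin m => P) :=
    (measurePreserving_piCongrLeft (fun _ : Fin (2 * m) => P) e).symm _
  have mp2 := measurePreserving_sumPiEquivProdPi (fun _ : Fin m ⊕ Fin m => P)
  have mp3 : MeasurePreserving (MeasurableEquiv.arrowProdEquivProdArrow 𝒳 𝒳 (Fin m)).symm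
      ((Measure.pi fun _ : Fin m => P).prod (Measure.pi fun _ : Fin m => P))
      (Measure.pi fun _ : Fin m => P.prod P) :=
    (measurePreserving_arrowProdEquivProdArrow 𝒳 𝒳 (Fin m) (fun _ => P) (fun _ => P)).symm _
  have mp4 : MeasurePreserving (fun (z : Fin m → 𝒳 × 𝒳) (i : Fin m) => Function.uncurry h (z i))
      (Measure.pi fun _ : Fin m => P.prod P)
      (Measure.pi fun _ : Fin m => (P.prod P).map (Function.uncurry h)) :=
    measurePreserving_pi _ _ (fun _ => ⟨hmeas, rfl⟩)
  have comp := (mp4.comp (mp3.comp (mp2.comp mp1)))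
  have hfun : (fun (z : Fin m → 𝒳 × 𝒳) (i : Fin m) => Function.uncurry h (z i)) ∘
      ((MeasurableEquiv.arrowProdEquivProdArrow 𝒳 𝒳 (Fin m)).symm ∘
        ((MeasurableEquiv.sumPiEquivProdPi fun _ : Fin m ⊕ Fin m => 𝒳) ∘
          (MeasurableEquiv.piCongrLeft (fun _ : Fin (2 * m) => 𝒳) e).symm))
      = (fun (X : Fin (2 * m) → 𝒳) (i : Fin m) =>
        h (X ⟨i.1, by have := i.isLt; omega⟩) (X ⟨i.1 + m, by have := i.isLt; omega⟩)) := by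
    funext X
    funext i
    simp only [Function.comp_apply, MeasurableEquiv.arrowProdEquivProdArrow,
      MeasurableEquiv.sumPiEquivProdPi, MeasurableEquiv.piCongrLeft, MeasurableEquiv.symm,
      MeasurableEquiv.coe_mk, Equiv.arrowProdEquivProdArrow, Equiv.sumPiEquivProdPi,
      Equiv.coe_fn_mk, Equiv.coe_fn_symm_mk, Equiv.piCongrLeft_symm_apply, Function.uncurry]
    congr 1 <;> · apply congrArg; apply Fin.ext; simp [he, finSumFinEquiv]
  rw [hfun] at comp
  exact comp

lemma dquant_lt_iff {𝒳 : Type*} (h : 𝒳 → 𝒳 → ℝ) (hnn : ∀ x y, 0 ≤ h x y) (m : ℕ) (hm : 0 < m)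
    (δ : ℝ) (hδ0 : 0 < δ) (hδ1 : δ < 1) (X : Fin (2 * m) → 𝒳) (c : ℝ) :
    dquant h m δ X < c ↔ (1 - δ) * m ≤
      ((Finset.univ.filter fun i : Fin m =>
        h (X ⟨i.1, by have := i.isLt; omega⟩) (X ⟨i.1 + m, by have := i.isLt; omega⟩) < c).card : ℝ) := by
  classical
  set g : Fin m → ℝ := fun i =>
    h (X ⟨i.1, by have := i.isLt; omega⟩) (X ⟨i.1 + m, by have := i.isLt; omega⟩) with hg
  show dquant h m δ X < c ↔
    (1 - δ) * m ≤ ((Finset.univ.filter fun i : Fin m => g i < c).card : ℝ)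
  have hm' : (0:ℝ) < m := by exact_mod_cast hm
  have hDemp : ∀ d : ℝ, Demp h m X d = ((Finset.univ.filter fun i => g i ≤ d).card : ℝ) / m := by
    intro d
    show (2 / (2 * m : ℝ)) * ((Finset.univ.filter fun i => g i ≤ d).card : ℝ)
      = ((Finset.univ.filter fun i => g i ≤ d).card : ℝ) / m
    field_simp
  have hmem : ∀ d : ℝ, (1 - δ ≤ Demp h m X d) ↔
      (1 - δ) * m ≤ ((Finset.univ.filter fun i => g i ≤ d).card : ℝ) := by
    intro d
    rw [hDemp, le_div_iff₀ hm']
  have hne : Nonempty (Fin m) := ⟨⟨0, hm⟩⟩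
  set S := {d : ℝ | 1 - δ ≤ Demp h m X d} with hS
  have hSne : S.Nonempty := by
    refine ⟨(Finset.univ.image g).max' (Finset.image_nonempty.mpr Finset.univ_nonempty), ?_⟩
    rw [hS, mem_setOf_eq, hmem]
    have : (Finset.univ.filter fun i => g i ≤
        (Finset.univ.image g).max' (Finset.image_nonempty.mpr Finset.univ_nonempty)) =
        Finset.univ := by
      refine Finset.filter_true_of_mem fun i _ => ?_
      exact Finset.le_max' _ _ (Finset.mem_image_of_mem g (Finset.mem_univ i))
    rw [this, Finset.card_univ, Fintype.card_fin]
    nlinarith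
  have hSbdd : BddBelow S := by
    refine ⟨0, fun d hd => ?_⟩
    by_contra hd0
    push_neg at hd0
    rw [hS, mem_setOf_eq, hmem] at hd
    have : (Finset.univ.filter fun i => g i ≤ d) = ∅ := by
      refine Finset.filter_false_of_mem fun i _ => ?_
      have := hnn (X ⟨i.1, by have := i.isLt; omega⟩) (X ⟨i.1 + m, by have := i.isLt; omega⟩)
      rw [hg]; push_neg; linarith
    rw [this] at hd
    simp only [Finset.card_empty, Nat.cast_zero] at hd
    nlinarith
  constructor
  · intro hlt
    rw [dquant] at hlt
    obtain ⟨d, hdS, hdc⟩ := (csInf_lt_iff hSbdd hSne).mp hlt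
    rw [hS, mem_setOf_eq, hmem] at hdS
    refine hdS.trans ?_
    have hsub : (Finset.univ.filter fun i => g i ≤ d) ⊆ (Finset.univ.filter fun i => g i < c) := by
      intro i hi
      rw [Finset.mem_filter] at hi ⊢
      exact ⟨hi.1, lt_of_le_of_lt hi.2 hdc⟩
    exact_mod_cast Nat.cast_le.mpr (Finset.card_le_card hsub)
  · intro hcard
    set s := Finset.univ.filter fun i : Fin m => g i < c with hs
    have hsne : s.Nonempty := by
      rw [← Finset.card_pos]
      rcases Nat.eq_zero_or_pos s.card with h0 | h0
      · exfalso
        rw [hs] at h0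
        rw [h0] at hcard
        simp only [Nat.cast_zero] at hcard
        nlinarith
      · exact h0
    set d := (s.image g).max' (Finset.image_nonempty.mpr hsne) with hd
    have hdc : d < c := by
      obtain ⟨j, hj, hjd⟩ := Finset.mem_image.mp ((s.image g).max'_mem (Finset.image_nonempty.mpr hsne))
      rw [hd, ← hjd]
      exact (Finset.mem_filter.mp hj).2
    have hdS : d ∈ S := by
      rw [hS, mem_setOf_eq, hmem]
      refine hcard.trans ?_
      have hsub : s ⊆ Finset.univ.filter fun i => g i ≤ d := by
        intro i hi
        rw [Finset.mem_filter]
        exact ⟨Finset.mem_univ _, Finset.le_max' _ _ (Finset.mem_image_of_mem g hi)⟩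
      exact_mod_cast Nat.cast_le.mpr (Finset.card_le_card hsub)
    exact lt_of_le_of_lt (csInf_le hSbdd hdS) hdc

lemma quantile_exists (μ : Measure ℝ) [IsProbabilityMeasure μ] (hsupp : μ (Iio 0) = 0)
    (δ' : ℝ) (h0 : 0 < δ') (h1 : δ' < 1) :
    ∃ c : ℝ, μ (Ioi c) ≤ ENNReal.ofReal δ' ∧ μ (Iio c) ≤ ENNReal.ofReal (1 - δ') := by
  set F := cdf μ with hF
  set S := {t : ℝ | 1 - δ' ≤ F t} with hS
  have hSne : S.Nonempty := by
    have h := (tendsto_cdf_atTop (μ := μ)).eventually (eventually_ge_nhds (by linarith : 1 - δ' < 1))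
    exact h.exists
  have hSbdd : BddBelow S := by
    refine ⟨0, fun t ht => ?_⟩
    by_contra ht0
    push_neg at ht0
    have hle : μ (Iic t) ≤ μ (Iio 0) := measure_mono fun x hx => lt_of_le_of_lt hx ht0
    rw [hsupp] at hle
    have : F t = 0 := by
      rw [hF, cdf_eq_real, measureReal_def, le_zero_iff.mp hle]
      simp
    rw [hS, mem_setOf_eq, this] at ht
    linarith
  set c := sInf S with hc
  have hup : ∀ x, c < x → 1 - δ' ≤ F x := by
    intro x hx
    obtain ⟨s, hsS, hsx⟩ := (csInf_lt_iff hSbdd hSne).mp hx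
    exact le_trans hsS (monotone_cdf _ (le_of_lt hsx))
  have hFc : 1 - δ' ≤ F c := by
    have hrc : Filter.Tendsto F (nhdsWithin c (Ioi c)) (nhds (F c)) :=
      ((cdf μ).right_continuous c).mono_left (nhdsWithin_mono c Ioi_subset_Ici_self)
    refine ge_of_tendsto hrc ?_
    filter_upwards [self_mem_nhdsWithin] with x hx
    exact hup x hx
  refine ⟨c, ?_, ?_⟩
  · have hIic : ENNReal.ofReal (1 - δ') ≤ μ (Iic c) := by
      rw [← ofReal_cdf]
      exact ENNReal.ofReal_le_ofReal hFc
    rw [← compl_Iic, measure_compl measurableSet_Iic (measure_ne_top _ _), measure_univ]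
    calc 1 - μ (Iic c) ≤ 1 - ENNReal.ofReal (1 - δ') := tsub_le_tsub_left hIic 1
    _ = ENNReal.ofReal δ' := by
      rw [← ENNReal.ofReal_one, ← ENNReal.ofReal_sub _ (by linarith)]
      norm_num
  · have hIio : Iio c = ⋃ n : ℕ, Iic (c - ((n:ℝ) + 1)⁻¹) := by
      ext x
      simp only [mem_Iio, mem_iUnion, mem_Iic]
      constructor
      · intro hx
        obtain ⟨n, hn⟩ := exists_nat_gt (c - x)⁻¹
        refine ⟨n, ?_⟩
        have hcx : 0 < c - x := by linarith
        have hn0 : (0:ℝ) < n + 1 := by positivity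
        have : ((n:ℝ) + 1)⁻¹ ≤ c - x := by
          rw [inv_le_comm₀ hn0 hcx]
          linarith
        linarith
      · rintro ⟨n, hn⟩
        have : (0:ℝ) < ((n:ℝ) + 1)⁻¹ := by positivity
        linarith
    rw [hIio]
    rw [Directed.measure_iUnion]
    · refine iSup_le fun n => ?_
      have hlt : c - ((n:ℝ) + 1)⁻¹ < c := by
        have : (0:ℝ) < ((n:ℝ) + 1)⁻¹ := by positivity
        linarith
      have hnotS : c - ((n:ℝ) + 1)⁻¹ ∉ S := fun hmem => absurd (csInf_le hSbdd hmem) (not_le.mpr hlt)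
      rw [hS, mem_setOf_eq, not_le] at hnotS
      rw [← ofReal_cdf]
      exact ENNReal.ofReal_le_ofReal (le_of_lt hnotS)
    · refine Monotone.directed_le fun a b hab => ?_
      refine Iic_subset_Iic.mpr ?_
      have hab' : (a:ℝ) ≤ (b:ℝ) := Nat.cast_le.mpr hab
      have : ((b:ℝ) + 1)⁻¹ ≤ ((a:ℝ) + 1)⁻¹ := by
        apply inv_anti₀ (by positivity)
        linarith
      linarith

lemma tail_real_le (m : ℕ) (δ δ' pr : ℝ) (hδ : 0 < δ) (hδδ' : δ < δ') (hδ'1 : δ' < 1)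
    (hpr0 : 0 ≤ pr) (hpr : pr ≤ 1 - δ') :
    Real.exp (-(4 * (δ' - δ) * ((1 - δ) * m))) *
        (pr * Real.exp (4 * (δ' - δ)) + (1 - pr)) ^ m
      ≤ Real.exp (-(δ' - δ) ^ 2 * (2 * m)) := by
  have hε : 0 < δ' - δ := by linarith
  have ht : (0:ℝ) ≤ 4 * (δ' - δ) := by linarith
  have hb := bernoulli_mgf_le hpr0 (by linarith : pr ≤ 1) ht
  have hbase : 0 ≤ pr * Real.exp (4 * (δ' - δ)) + (1 - pr) := by
    have h2 := Real.exp_pos (4 * (δ' - δ))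
    nlinarith
  have hpow := pow_le_pow_left₀ hbase hb m
  calc Real.exp (-(4 * (δ' - δ) * ((1 - δ) * m))) *
        (pr * Real.exp (4 * (δ' - δ)) + (1 - pr)) ^ m
      ≤ Real.exp (-(4 * (δ' - δ) * ((1 - δ) * m))) *
        Real.exp (pr * (4 * (δ' - δ)) + (4 * (δ' - δ)) ^ 2 / 8) ^ m :=
        mul_le_mul_of_nonneg_left hpow (Real.exp_nonneg _)
    _ = Real.exp (-(4 * (δ' - δ) * ((1 - δ) * m)) +
          m * (pr * (4 * (δ' - δ)) + (4 * (δ' - δ)) ^ 2 / 8)) := by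
        rw [← Real.exp_nat_mul, ← Real.exp_add]
    _ ≤ Real.exp (-(δ' - δ) ^ 2 * (2 * m)) := by
        apply Real.exp_le_exp.mpr
        have h9 : 0 ≤ 4 * (δ' - δ) * (m:ℝ) * ((1 - δ') - pr) := by
          apply mul_nonneg
          · positivity
          · linarith
        nlinarith [Nat.cast_nonneg (α := ℝ) m]

end Aux

/-- **The empirical quantile is a valid high-probability sensitivity bound.** For
`δ < δ'` and a fresh independent pair `(x,x') ~ P ⊗ P`,
`P(h(x,x') > d_δ(X)) ≤ δ' + 2 e^{-(δ'-δ)² n}` with `n = 2m`. -/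
theorem stmt14 {𝒳 : Type*} [MeasurableSpace 𝒳] (P : Measure 𝒳) [IsProbabilityMeasure P]
    (h : 𝒳 → 𝒳 → ℝ) (hmeas : Measurable (Function.uncurry h)) (hnn : ∀ x y, 0 ≤ h x y)
    (m : ℕ) (hm : 0 < m) (δ δ' : ℝ) (hδ : 0 < δ) (hδδ' : δ < δ') (hδ'1 : δ' < 1) :
    ((Measure.pi fun _ : Fin (2 * m) => P).prod (P.prod P))
        {ω | dquant h m δ ω.1 < h ω.2.1 ω.2.2}
      ≤ ENNReal.ofReal (δ' + 2 * Real.exp (-(δ' - δ) ^ 2 * (2 * m))) := by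
  classical
  set μ := (P.prod P).map (Function.uncurry h) with hμ
  haveI : IsProbabilityMeasure μ := Measure.isProbabilityMeasure_map hmeas.aemeasurable
  have hsupp : μ (Set.Iio 0) = 0 := by
    rw [hμ, Measure.map_apply hmeas measurableSet_Iio]
    have hempty : Function.uncurry h ⁻¹' Set.Iio 0 = ∅ :=
      Set.eq_empty_of_forall_notMem fun z hz => absurd hz (not_lt.mpr (hnn z.1 z.2))
    rw [hempty]
    exact measure_empty
  obtain ⟨c, hIoi, hIio⟩ := quantile_exists μ hsupp δ' (lt_trans hδ hδδ') hδ'1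
  set E1 := {x : Fin (2 * m) → 𝒳 | dquant h m δ x < c} with hE1
  set E2 := {y : 𝒳 × 𝒳 | c < h y.1 y.2} with hE2
  have hsub : {ω : (Fin (2 * m) → 𝒳) × (𝒳 × 𝒳) | dquant h m δ ω.1 < h ω.2.1 ω.2.2}
      ⊆ (E1 ×ˢ Set.univ) ∪ (Set.univ ×ˢ E2) := by
    intro ω hω
    by_cases hc2 : c < h ω.2.1 ω.2.2
    · exact Or.inr ⟨Set.mem_univ _, hc2⟩
    · exact Or.inl ⟨lt_of_lt_of_le hω (not_lt.mp hc2), Set.mem_univ _⟩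
  refine le_trans (measure_mono hsub) (le_trans (measure_union_le _ _) ?_)
  rw [Measure.prod_prod, Measure.prod_prod, measure_univ, measure_univ, mul_one, one_mul]
  have hterm2 : (P.prod P) E2 ≤ ENNReal.ofReal δ' := by
    have hpre : E2 = Function.uncurry h ⁻¹' Set.Ioi c := rfl
    rw [hpre, ← Measure.map_apply hmeas measurableSet_Ioi, ← hμ]
    exact hIoi
  have hterm1 : (Measure.pi fun _ : Fin (2 * m) => P) E1
      ≤ ENNReal.ofReal (Real.exp (-(δ' - δ) ^ 2 * (2 * m))) := by
    have hE1eq : E1 = (fun (X : Fin (2 * m) → 𝒳) (i : Fin m) =>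
        h (X ⟨i.1, by have := i.isLt; omega⟩) (X ⟨i.1 + m, by have := i.isLt; omega⟩)) ⁻¹'
        {y : Fin m → ℝ |
          (1 - δ) * m ≤ ((Finset.univ.filter fun i : Fin m => y i < c).card : ℝ)} := by
      ext X
      simp only [hE1, Set.mem_setOf_eq, Set.mem_preimage]
      exact dquant_lt_iff h hnn m hm δ hδ (lt_trans hδδ' hδ'1) X c
    have hmeasE : MeasurableSet {y : Fin m → ℝ |
        (1 - δ) * m ≤ ((Finset.univ.filter fun i : Fin m => y i < c).card : ℝ)} := by
      have hcount : Measurable fun y : Fin m → ℝ =>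
          ((Finset.univ.filter fun i : Fin m => y i < c).card : ℝ) := by
        simp_rw [Finset.card_filter]
        push_cast
        refine Finset.measurable_sum _ fun i _ => ?_
        exact Measurable.ite (measurableSet_lt (measurable_pi_apply i) measurable_const)
          measurable_const measurable_const
      exact hcount measurableSet_Ici
    rw [hE1eq, (mp_pairs P h hmeas m).measure_preimage hmeasE.nullMeasurableSet]
    refine le_trans (pi_tail_le μ m c ((1 - δ) * m) (4 * (δ' - δ)) (by linarith)) ?_
    apply ENNReal.ofReal_le_ofReal
    have hIio' : (μ (Set.Iio c)).toReal ≤ 1 - δ' :=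
      ENNReal.toReal_le_of_le_ofReal (by linarith) hIio
    have hIci : (μ (Set.Ici c)).toReal = 1 - (μ (Set.Iio c)).toReal := by
      have h4 : μ (Set.Ici c) = 1 - μ (Set.Iio c) := by
        rw [← Set.compl_Iio]
        exact prob_compl_eq_one_sub measurableSet_Iio
      rw [h4, ENNReal.toReal_sub_of_le prob_le_one ENNReal.one_ne_top, ENNReal.toReal_one]
    rw [hIci]
    exact tail_real_le m δ δ' (μ (Set.Iio c)).toReal hδ hδδ' hδ'1 ENNReal.toReal_nonneg hIio'
  refine le_trans (add_le_add hterm1 hterm2) ?_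
  rw [← ENNReal.ofReal_add (Real.exp_nonneg _) (by linarith)]
  apply ENNReal.ofReal_le_ofReal
  have := Real.exp_pos (-(δ' - δ) ^ 2 * (2 * m))
  linarith
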